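/- Let K₀ ⊆ K be number fields with n = [K : K₀], let 𝔭₀ be a nonzero prime ideal of the ring of integers of K₀, and let 𝔭₁, …, 𝔭_m be the prime ideals of the ring of integers of K lying above 𝔭₀. Then ∏_{i=1}^m log N(𝔭_i) ≤ 4^n (log N(𝔭₀))^n, where N(·) denotes the absolute norm of a prime ideal. -/

import Mathlib

set_option synthInstance.maxHeartbeats 1000000
set_option maxHeartbeats 1000000

open NumberField

/-- Let `K₀ ⊆ K` be number fields with `n = [K : K₀]`, let `𝔭₀` be a nonzero prime
ideal of `𝓞 K₀`, and let `s` be the set of prime ideals of `𝓞 K` lying above `𝔭₀`.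
Then `∏_{𝔭 ∈ s} log N(𝔭) ≤ 4 ^ n * (log N(𝔭₀)) ^ n`, where `N(·)` is the absolute
norm. -/
theorem prod_log_absNorm_primes_over_le (K₀ K : Type*) [Field K₀] [Field K]
    [NumberField K₀] [NumberField K] [Algebra K₀ K]
    (n : ℕ) (hn : n = Module.finrank K₀ K)
    (p₀ : Ideal (𝓞 K₀)) (hp₀ : p₀.IsPrime) (hp₀0 : p₀ ≠ ⊥)
    (s : Finset (Ideal (𝓞 K)))
    (hs : ∀ Q : Ideal (𝓞 K),
      Q ∈ s ↔ Q.IsPrime ∧ Ideal.comap (algebraMap (𝓞 K₀) (𝓞 K)) Q = p₀) :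
    ∏ Q ∈ s, Real.log (Ideal.absNorm Q) ≤
      4 ^ n * Real.log (Ideal.absNorm p₀) ^ n := by
  classical
  haveI hmax : p₀.IsMaximal := hp₀.isMaximal hp₀0
  haveI : Module.Finite (𝓞 K₀) (𝓞 K) :=
    Module.Finite.of_restrictScalars_finite ℤ (𝓞 K₀) (𝓞 K)
  have hinj : Function.Injective (algebraMap (𝓞 K₀) (𝓞 K)) := by
    have h1 : Function.Injective (algebraMap (𝓞 K₀) K) := by
      rw [IsScalarTower.algebraMap_eq (𝓞 K₀) K₀ K]
      exact (algebraMap K₀ K).injective.comp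
        (FaithfulSMul.algebraMap_injective (𝓞 K₀) K₀)
    rw [IsScalarTower.algebraMap_eq (𝓞 K₀) (𝓞 K) K, RingHom.coe_comp] at h1
    exact Function.Injective.of_comp h1
  set F := UniqueFactorizationMonoid.factors
      (Ideal.map (algebraMap (𝓞 K₀) (𝓞 K)) p₀) with hF
  have hmapne : Ideal.map (algebraMap (𝓞 K₀) (𝓞 K)) p₀ ≠ ⊥ := by
    rw [Ne, Ideal.map_eq_bot_iff_le_ker,
      (RingHom.injective_iff_ker_eq_bot _).mp hinj, le_bot_iff]
    exact hp₀0
  have hseq : s = F.toFinset := by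
    ext Q
    rw [hs, Multiset.mem_toFinset]
    constructor
    · rintro ⟨hQp, hQc⟩
      have hQne : Q ≠ ⊥ := by
        rintro rfl
        rw [← Ideal.comap_bot_of_injective _ hinj] at hp₀0
        exact hp₀0 hQc.symm
      have hdvd : Q ∣ Ideal.map (algebraMap (𝓞 K₀) (𝓞 K)) p₀ :=
        Ideal.dvd_iff_le.mpr (Ideal.map_le_iff_le_comap.mpr hQc.ge)
      obtain ⟨q, hq, hassoc⟩ := UniqueFactorizationMonoid.exists_mem_factors_of_dvd hmapne
        ((Ideal.prime_iff_isPrime hQne).mpr hQp).irreducible hdvd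
      rwa [associated_iff_eq.mp hassoc]
    · intro hQ
      have hp := UniqueFactorizationMonoid.prime_of_factor _ hQ
      have hQp : Q.IsPrime := Ideal.isPrime_of_prime hp
      refine ⟨hQp, ?_⟩
      have hle : p₀ ≤ Ideal.comap (algebraMap (𝓞 K₀) (𝓞 K)) Q :=
        Ideal.map_le_iff_le_comap.mp
          (Ideal.le_of_dvd (UniqueFactorizationMonoid.dvd_of_mem_factors hQ))
      have hpr : (Ideal.comap (algebraMap (𝓞 K₀) (𝓞 K)) Q).IsPrime := hQp.comap _
      exact (hmax.eq_of_le hpr.ne_top hle).symm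
  set f : Ideal (𝓞 K) → ℕ :=
    fun Q => Ideal.inertiaDeg' p₀ Q with hfdef
  set e : Ideal (𝓞 K) → ℕ :=
    fun Q => Ideal.ramificationIdx' p₀ Q with hedef
  -- norm of primes above
  have key : ∀ Q ∈ s, Ideal.absNorm Q = Ideal.absNorm p₀ ^ f Q := by
    intro Q hQ
    obtain ⟨hQp, hQc⟩ := (hs Q).mp hQ
    haveI := hQp
    haveI : Q.LiesOver p₀ := ⟨hQc.symm⟩
    have hQne : Q ≠ ⊥ := by
      rintro rfl
      rw [← Ideal.comap_bot_of_injective _ hinj] at hp₀0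
      exact hp₀0 hQc.symm
    have hN0 : Ideal.absNorm Q ≠ 0 := by
      simpa [Ideal.absNorm_eq_zero_iff] using hQne
    have hN0' : Ideal.absNorm p₀ ≠ 0 := by
      simpa [Ideal.absNorm_eq_zero_iff] using hp₀0
    have hcardQ : Ideal.absNorm Q = Nat.card (𝓞 K ⧸ Q) := by
      rw [Ideal.absNorm_apply, Submodule.cardQuot_apply]
    have hcardp : Ideal.absNorm p₀ = Nat.card (𝓞 K₀ ⧸ p₀) := by
      rw [Ideal.absNorm_apply, Submodule.cardQuot_apply]
    haveI : Finite (𝓞 K ⧸ Q) := Nat.finite_of_card_ne_zero (by rw [← hcardQ]; exact hN0)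
    haveI : Finite (𝓞 K₀ ⧸ p₀) := Nat.finite_of_card_ne_zero (by rw [← hcardp]; exact hN0')
    haveI : Fintype (𝓞 K ⧸ Q) := Fintype.ofFinite _
    haveI : Fintype (𝓞 K₀ ⧸ p₀) := Fintype.ofFinite _
    have hfd : f Q = Module.finrank (𝓞 K₀ ⧸ p₀) (𝓞 K ⧸ Q) :=
      Ideal.inertiaDeg'_algebraMap p₀ Q
    rw [hcardQ, hcardp, Nat.card_eq_fintype_card, Nat.card_eq_fintype_card, hfd]
    exact @Module.card_eq_pow_finrank _ _ (Ideal.Quotient.field p₀).toDivisionRing _ _ _ _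
  -- basic bounds on the log of the norm
  set L := Real.log (Ideal.absNorm p₀) with hL
  have h2N : 2 ≤ Ideal.absNorm p₀ := by
    have h0 : Ideal.absNorm p₀ ≠ 0 := by
      simpa [Ideal.absNorm_eq_zero_iff] using hp₀0
    have h1 : Ideal.absNorm p₀ ≠ 1 := by
      simpa [Ideal.absNorm_eq_one_iff] using hp₀.ne_top
    omega
  have hlog2 : Real.log 2 ≤ L := by
    apply Real.log_le_log (by norm_num)
    exact_mod_cast h2N
  have hLhalf : (1 : ℝ) / 2 ≤ L := by
    have := Real.log_two_gt_d9
    linarith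
  have hLpos : 0 < L := by linarith
  have h4L : (2 : ℝ) ≤ 4 * L := by linarith
  have h4L1 : (1 : ℝ) ≤ 4 * L := by linarith
  -- pointwise bound : log N(Q) ≤ (4L)^(f Q)
  have pointwise : ∀ Q ∈ s, Real.log (Ideal.absNorm Q) ≤ (4 * L) ^ (f Q) := by
    intro Q hQ
    obtain ⟨hQp, hQc⟩ := (hs Q).mp hQ
    haveI := hQp
    haveI : Q.LiesOver p₀ := ⟨hQc.symm⟩
    have hfpos : 0 < f Q := Ideal.inertiaDeg'_pos p₀ Q
    have hlogQ : Real.log (Ideal.absNorm Q) = (f Q : ℝ) * L := by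
      rw [key Q hQ]
      push_cast
      rw [Real.log_pow]
    rw [hlogQ]
    set m := f Q
    have hm1 : 1 ≤ m := hfpos
    have hm2 : (m : ℝ) ≤ 2 ^ (m - 1) := by
      have := Nat.lt_two_pow_self (n := m - 1)
      have : m ≤ 2 ^ (m - 1) := by omega
      exact_mod_cast this
    calc (m : ℝ) * L ≤ 2 ^ (m - 1) * L :=
          mul_le_mul_of_nonneg_right hm2 hLpos.le
      _ ≤ (4 * L) ^ (m - 1) * (4 * L) := by
          apply mul_le_mul _ (by linarith) hLpos.le (by positivity)
          exact pow_le_pow_left₀ (by norm_num) h4L _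
      _ = (4 * L) ^ m := by
          rw [← pow_succ]
          congr 1
          omega
  -- sum of inertia degrees is at most n
  have hsum : ∑ Q ∈ s, f Q ≤ n := by
    rw [hn, ← Ideal.sum_ramification_inertia (S := 𝓞 K) (p := p₀) K₀ K hp₀0, hseq]
    apply Finset.sum_le_sum
    intro Q hQ
    have he0 : e Q ≠ 0 :=
      Ideal.IsDedekindDomain.ramificationIdx'_ne_zero
        (UniqueFactorizationMonoid.ne_zero_of_mem_factors (Multiset.mem_toFinset.mp hQ))
        (Ideal.isPrime_of_prime
          (UniqueFactorizationMonoid.prime_of_factor _ (Multiset.mem_toFinset.mp hQ)))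
        (Ideal.le_of_dvd
          (UniqueFactorizationMonoid.dvd_of_mem_factors (Multiset.mem_toFinset.mp hQ)))
    have : 1 ≤ e Q := Nat.one_le_iff_ne_zero.mpr he0
    calc f Q = 1 * f Q := (one_mul _).symm
      _ ≤ e Q * f Q := Nat.mul_le_mul_right _ this
  -- put it together
  have hlognn : ∀ Q ∈ s, 0 ≤ Real.log (Ideal.absNorm Q) := fun Q _ =>
    Real.log_natCast_nonneg _
  calc ∏ Q ∈ s, Real.log (Ideal.absNorm Q)
      ≤ ∏ Q ∈ s, (4 * L) ^ (f Q) := Finset.prod_le_prod hlognn pointwise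
    _ = (4 * L) ^ (∑ Q ∈ s, f Q) := Finset.prod_pow_eq_pow_sum _ _ _
    _ ≤ (4 * L) ^ n := pow_le_pow_right₀ h4L1 hsum
    _ = 4 ^ n * L ^ n := mul_pow _ _ _
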